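/- Let d ≥ 2 and let l₁, l₂ ∈ ℤ₀^d be linearly independent over ℝ with |l₁| = |l₂|. Let z ∈ ℤ^d satisfy ⟨z,l₂⟩·|l₁|² − ⟨z,l₁⟩·⟨l₁,l₂⟩ ≥ 1 and ⟨z,l₁⟩·|l₂|² − ⟨z,l₂⟩·⟨l₁,l₂⟩ ≥ 0. Define Γ(n) = z + ⌊(n+1)/2⌋·l₁ + ⌊n/2⌋·l₂ for n ∈ ℕ and Δ(n) = Γ(n+1) − Γ(n) (so Δ(n) = l₁ when n is even and Δ(n) = l₂ when n is odd). Then for all n ∈ ℕ: |Γ(n)|²·|Δ(n)|² − ⟨Γ(n), Δ(n)⟩² ≥ (n+1)²·|Δ(n)|²/(4|l₁|²); equivalently, |Π_{Δ(n)}^⊥ Γ(n)|² ≥ (n+1)²/(4|l₁|²). -/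
import Mathlib
set_option maxHeartbeats 1000000

noncomputable section

/-- Euclidean inner product on `ℤ^d` (integer valued). -/
def ipZ {d : ℕ} (k l : Fin d → ℤ) : ℤ := ∑ i, k i * l i

/-- Squared Euclidean norm on `ℤ^d` (integer valued). -/
def nsqZ {d : ℕ} (k : Fin d → ℤ) : ℤ := ∑ i, (k i) ^ 2

/-- A lattice vector regarded as a vector of `ℝ^d`. -/
def toR {d : ℕ} (k : Fin d → ℤ) : Fin d → ℝ := fun i => (k i : ℝ)

/-- The orbit `Γ(n) = z + ⌊(n+1)/2⌋ l₁ + ⌊n/2⌋ l₂`. -/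
def orbitA {d : ℕ} (z l₁ l₂ : Fin d → ℤ) (n : ℕ) : Fin d → ℤ :=
  z + (((n + 1) / 2 : ℕ) : ℤ) • l₁ + ((n / 2 : ℕ) : ℤ) • l₂

lemma csZ {d : ℕ} (x y : Fin d → ℤ) : ipZ x y ^ 2 ≤ nsqZ x * nsqZ y := by
  simpa [ipZ, nsqZ] using Finset.sum_mul_sq_le_sq_mul_sq Finset.univ x y

lemma nsq3 {d : ℕ} (x y w : Fin d → ℤ) (a c e : ℤ) :
    nsqZ (a • x + c • y + e • w) =
      a ^ 2 * nsqZ x + c ^ 2 * nsqZ y + e ^ 2 * nsqZ w +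
        2 * a * c * ipZ x y + 2 * a * e * ipZ x w + 2 * c * e * ipZ y w := by
  simp only [nsqZ, ipZ, Finset.mul_sum, ← Finset.sum_add_distrib]
  refine Finset.sum_congr rfl fun i _ => ?_
  simp [Pi.add_apply, Pi.smul_apply, smul_eq_mul]; ring

lemma ip3 {d : ℕ} (x y w v : Fin d → ℤ) (a c e : ℤ) :
    ipZ (a • x + c • y + e • w) v = a * ipZ x v + c * ipZ y v + e * ipZ w v := by
  simp only [ipZ, Finset.mul_sum, ← Finset.sum_add_distrib]
  refine Finset.sum_congr rfl fun i _ => ?_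
  simp [Pi.add_apply, Pi.smul_apply, smul_eq_mul]; ring

lemma nsq2 {d : ℕ} (x y : Fin d → ℤ) (a c : ℤ) :
    nsqZ (a • x + c • y) = a ^ 2 * nsqZ x + c ^ 2 * nsqZ y + 2 * a * c * ipZ x y := by
  have := nsq3 x y x a c 0
  simpa [ipZ, nsqZ] using this

lemma ip2 {d : ℕ} (x y v : Fin d → ℤ) (a c : ℤ) :
    ipZ (a • x + c • y) v = a * ipZ x v + c * ipZ y v := by
  have := ip3 x y x v a c 0
  simpa using this

lemma nsqZ_pos {d : ℕ} {l : Fin d → ℤ} (hl : l ≠ 0) : 1 ≤ nsqZ l := by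
  obtain ⟨i, hi⟩ := Function.ne_iff.mp hl
  have h1 : 1 ≤ l i ^ 2 := by
    have h0 : l i ≠ 0 := by simpa using hi
    have habs : 1 ≤ |l i| := Int.one_le_abs h0
    nlinarith [sq_abs (l i), habs]
  calc (1 : ℤ) ≤ l i ^ 2 := h1
    _ ≤ ∑ j, l j ^ 2 :=
      Finset.single_le_sum (fun j _ => sq_nonneg (l j)) (Finset.mem_univ i)

theorem stmt13 (d : ℕ) (hd : 2 ≤ d) (l₁ l₂ z : Fin d → ℤ)
    (hl₁ : l₁ ≠ 0) (hl₂ : l₂ ≠ 0)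
    (hind : LinearIndependent ℝ ![toR l₁, toR l₂]) (hnorm : nsqZ l₁ = nsqZ l₂)
    (h1 : 1 ≤ ipZ z l₂ * nsqZ l₁ - ipZ z l₁ * ipZ l₁ l₂)
    (h2 : 0 ≤ ipZ z l₁ * nsqZ l₂ - ipZ z l₂ * ipZ l₁ l₂) (n : ℕ) :
    ((n : ℝ) + 1) ^ 2 * ((nsqZ (orbitA z l₁ l₂ (n + 1) - orbitA z l₁ l₂ n) : ℤ) : ℝ) /
        (4 * ((nsqZ l₁ : ℤ) : ℝ)) ≤
      ((nsqZ (orbitA z l₁ l₂ n) * nsqZ (orbitA z l₁ l₂ (n + 1) - orbitA z l₁ l₂ n) -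
          ipZ (orbitA z l₁ l₂ n) (orbitA z l₁ l₂ (n + 1) - orbitA z l₁ l₂ n) ^ 2 : ℤ) : ℝ) := by
  have hN1 : 1 ≤ nsqZ l₁ := nsqZ_pos hl₁
  have hll : ipZ l₁ l₁ = nsqZ l₁ := by simp [ipZ, nsqZ, sq]
  have hl2l2 : ipZ l₂ l₂ = nsqZ l₂ := by simp [ipZ, nsqZ, sq]
  have hc2 : ipZ l₂ l₁ = ipZ l₁ l₂ := by simp [ipZ, mul_comm]
  have hzc2 : ipZ l₂ z = ipZ z l₂ := by simp [ipZ, mul_comm]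
  have hzc1 : ipZ l₁ z = ipZ z l₁ := by simp [ipZ, mul_comm]
  -- Cauchy–Schwarz facts
  have cs1 : 0 ≤ nsqZ l₁ * nsqZ z - ipZ z l₁ ^ 2 := by nlinarith [csZ z l₁]
  have cs2 : 0 ≤ nsqZ l₁ * nsqZ z - ipZ z l₂ ^ 2 := by nlinarith [csZ z l₂, hnorm]
  have cs3 : 0 ≤ nsqZ l₁ ^ 2 - ipZ l₁ l₂ ^ 2 := by nlinarith [csZ l₁ l₂, hnorm]
  -- key: (NZ - A²)(N² - b²) ≥ (NB - Ab)² via CS on projected integer vectors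
  have key : (nsqZ l₁ * ipZ z l₂ - ipZ z l₁ * ipZ l₁ l₂) ^ 2 ≤
      (nsqZ l₁ * nsqZ z - ipZ z l₁ ^ 2) * (nsqZ l₁ ^ 2 - ipZ l₁ l₂ ^ 2) := by
    have hcs := csZ (nsqZ l₁ • z + (-ipZ z l₁) • l₁) (nsqZ l₁ • l₂ + (-ipZ l₁ l₂) • l₁)
    have e1 : nsqZ (nsqZ l₁ • z + (-ipZ z l₁) • l₁) =
        nsqZ l₁ * (nsqZ l₁ * nsqZ z - ipZ z l₁ ^ 2) := by
      rw [nsq2]; ring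
    have e2 : nsqZ (nsqZ l₁ • l₂ + (-ipZ l₁ l₂) • l₁) =
        nsqZ l₁ * (nsqZ l₁ ^ 2 - ipZ l₁ l₂ ^ 2) := by
      rw [nsq2, hc2, ← hnorm]; ring
    have e3 : ipZ (nsqZ l₁ • z + (-ipZ z l₁) • l₁) (nsqZ l₁ • l₂ + (-ipZ l₁ l₂) • l₁) =
        nsqZ l₁ * (nsqZ l₁ * ipZ z l₂ - ipZ z l₁ * ipZ l₁ l₂) := by
      have hzv : ipZ z (nsqZ l₁ • l₂ + (-ipZ l₁ l₂) • l₁) =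
          nsqZ l₁ * ipZ z l₂ - ipZ l₁ l₂ * ipZ z l₁ := by
        have h := ip2 l₂ l₁ z (nsqZ l₁) (-ipZ l₁ l₂)
        have hsymm : ipZ (nsqZ l₁ • l₂ + (-ipZ l₁ l₂) • l₁) z =
            ipZ z (nsqZ l₁ • l₂ + (-ipZ l₁ l₂) • l₁) := by simp [ipZ, mul_comm]
        rw [hsymm] at h; rw [h, hzc2, hzc1]; ring
      have hlv : ipZ l₁ (nsqZ l₁ • l₂ + (-ipZ l₁ l₂) • l₁) = 0 := by
        have h := ip2 l₂ l₁ l₁ (nsqZ l₁) (-ipZ l₁ l₂)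
        have hsymm : ipZ (nsqZ l₁ • l₂ + (-ipZ l₁ l₂) • l₁) l₁ =
            ipZ l₁ (nsqZ l₁ • l₂ + (-ipZ l₁ l₂) • l₁) := by simp [ipZ, mul_comm]
        rw [hsymm] at h; rw [h, hc2, hll]; ring
      rw [ip2 z l₁ _ (nsqZ l₁) (-ipZ z l₁), hzv, hlv]; ring
    rw [e1, e2, e3] at hcs
    nlinarith [hcs, hN1]
  have h1' : 1 ≤ nsqZ l₁ * ipZ z l₂ - ipZ z l₁ * ipZ l₁ l₂ := by linarith [h1]
  have hS : 1 ≤ (nsqZ l₁ * ipZ z l₂ - ipZ z l₁ * ipZ l₁ l₂) ^ 2 := by nlinarith [h1']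
  have hPQ : 1 ≤ (nsqZ l₁ * nsqZ z - ipZ z l₁ ^ 2) * (nsqZ l₁ ^ 2 - ipZ l₁ l₂ ^ 2) :=
    le_trans hS key
  have hD : 1 ≤ nsqZ l₁ ^ 2 - ipZ l₁ l₂ ^ 2 := by nlinarith [hPQ, cs1, cs3]
  have hZA : 1 ≤ nsqZ l₁ * nsqZ z - ipZ z l₁ ^ 2 := by nlinarith [hPQ, cs1, cs3]
  have hNR : (0 : ℝ) < ((nsqZ l₁ : ℤ) : ℝ) := by exact_mod_cast hN1.trans_lt' (by norm_num)
  rcases Nat.even_or_odd n with ⟨m, hm⟩ | ⟨m, hm⟩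
  · -- n = 2m, Δ = l₁, Γ = z + m l₁ + m l₂
    subst hm
    have hΓ : orbitA z l₁ l₂ (m + m) = (1 : ℤ) • z + (m : ℤ) • l₁ + (m : ℤ) • l₂ := by
      unfold orbitA
      have e1 : ((m + m + 1) / 2 : ℕ) = m := by omega
      have e2 : ((m + m) / 2 : ℕ) = m := by omega
      rw [e1, e2, one_smul]
    have hΔ : orbitA z l₁ l₂ (m + m + 1) - orbitA z l₁ l₂ (m + m) = l₁ := by
      unfold orbitA
      have e1 : ((m + m + 1 + 1) / 2 : ℕ) = m + 1 := by omega
      have e2 : ((m + m + 1) / 2 : ℕ) = m := by omega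
      have e4 : ((m + m) / 2 : ℕ) = m := by omega
      rw [e1, e2, e4]
      push_cast
      module
    rw [hΔ, hΓ]
    rw [div_le_iff₀ (by positivity)]
    have hnsq := nsq3 z l₁ l₂ (1 : ℤ) (m : ℤ) (m : ℤ)
    have hip := ip3 z l₁ l₂ l₁ (1 : ℤ) (m : ℤ) (m : ℤ)
    rw [hll, hc2] at hip
    rw [← hnorm] at hnsq
    have hm0 : (0 : ℤ) ≤ (m : ℤ) := Int.ofNat_nonneg m
    have hGm : ((m : ℤ) + 1) ^ 2 ≤
        nsqZ ((1 : ℤ) • z + (m : ℤ) • l₁ + (m : ℤ) • l₂) * nsqZ l₁ -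
          ipZ ((1 : ℤ) • z + (m : ℤ) • l₁ + (m : ℤ) • l₂) l₁ ^ 2 := by
      rw [hnsq, hip]
      have p1 : (m : ℤ) * 1 ≤ (m : ℤ) * (nsqZ l₁ * ipZ z l₂ - ipZ z l₁ * ipZ l₁ l₂) :=
        mul_le_mul_of_nonneg_left h1' hm0
      have p2 : (m : ℤ) ^ 2 * 1 ≤ (m : ℤ) ^ 2 * (nsqZ l₁ ^ 2 - ipZ l₁ l₂ ^ 2) :=
        mul_le_mul_of_nonneg_left hD (sq_nonneg _)
      nlinarith [hZA, p1, p2]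
    have hint : ((m + m : ℤ) + 1) ^ 2 * nsqZ l₁ ≤
        (nsqZ ((1 : ℤ) • z + (m : ℤ) • l₁ + (m : ℤ) • l₂) * nsqZ l₁ -
          ipZ ((1 : ℤ) • z + (m : ℤ) • l₁ + (m : ℤ) • l₂) l₁ ^ 2) * (4 * nsqZ l₁) := by
      nlinarith [hGm, hN1, hm0, sq_nonneg ((m : ℤ))]
    exact_mod_cast hint
  · -- n = 2m+1, Δ = l₂, Γ = z + (m+1) l₁ + m l₂
    subst hm
    have hΓ : orbitA z l₁ l₂ (2 * m + 1) =
        (1 : ℤ) • z + ((m : ℤ) + 1) • l₁ + (m : ℤ) • l₂ := by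
      unfold orbitA
      have e1 : ((2 * m + 1 + 1) / 2 : ℕ) = m + 1 := by omega
      have e2 : ((2 * m + 1) / 2 : ℕ) = m := by omega
      rw [e1, e2, one_smul]
      push_cast
      rfl
    have hΔ : orbitA z l₁ l₂ (2 * m + 1 + 1) - orbitA z l₁ l₂ (2 * m + 1) = l₂ := by
      unfold orbitA
      have e1 : ((2 * m + 1 + 1 + 1) / 2 : ℕ) = m + 1 := by omega
      have e2 : ((2 * m + 1 + 1) / 2 : ℕ) = m + 1 := by omega
      have e4 : ((2 * m + 1) / 2 : ℕ) = m := by omega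
      rw [e1, e2, e4]
      push_cast
      module
    rw [hΔ, hΓ]
    rw [div_le_iff₀ (by positivity)]
    have hnsq := nsq3 z l₁ l₂ (1 : ℤ) ((m : ℤ) + 1) (m : ℤ)
    have hip := ip3 z l₁ l₂ l₂ (1 : ℤ) ((m : ℤ) + 1) (m : ℤ)
    rw [hl2l2, ← hnorm] at hip
    have hm0 : (0 : ℤ) ≤ (m : ℤ) := Int.ofNat_nonneg m
    have h2' : 0 ≤ ipZ z l₁ * nsqZ l₁ - ipZ z l₂ * ipZ l₁ l₂ := by
      rw [hnorm]; linarith [h2]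
    have hGm : ((m : ℤ) + 1) ^ 2 ≤
        nsqZ ((1 : ℤ) • z + ((m : ℤ) + 1) • l₁ + (m : ℤ) • l₂) * nsqZ l₂ -
          ipZ ((1 : ℤ) • z + ((m : ℤ) + 1) • l₁ + (m : ℤ) • l₂) l₂ ^ 2 := by
      rw [hnsq, hip, ← hnorm]
      have p1 : 0 ≤ ((m : ℤ) + 1) * (ipZ z l₁ * nsqZ l₁ - ipZ z l₂ * ipZ l₁ l₂) :=
        mul_nonneg (by linarith) h2'
      have p2 : ((m : ℤ) + 1) ^ 2 * 1 ≤ ((m : ℤ) + 1) ^ 2 * (nsqZ l₁ ^ 2 - ipZ l₁ l₂ ^ 2) :=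
        mul_le_mul_of_nonneg_left hD (sq_nonneg _)
      nlinarith [cs2, p1, p2]
    have hint : ((2 * m + 1 : ℤ) + 1) ^ 2 * nsqZ l₂ ≤
        (nsqZ ((1 : ℤ) • z + ((m : ℤ) + 1) • l₁ + (m : ℤ) • l₂) * nsqZ l₂ -
          ipZ ((1 : ℤ) • z + ((m : ℤ) + 1) • l₁ + (m : ℤ) • l₂) l₂ ^ 2) * (4 * nsqZ l₁) := by
      rw [← hnorm]
      have q := mul_le_mul_of_nonneg_left hGm (by linarith : (0:ℤ) ≤ nsqZ l₁)
      rw [← hnorm] at hGm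
      linarith [q, mul_le_mul_of_nonneg_left hGm (by linarith : (0:ℤ) ≤ nsqZ l₁)]
    exact_mod_cast hint
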